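/- If w ∈ W satisfies wΔ̄ = Δ̄ where Δ̄ = Δ ∪ {−θ}, then w(−θ) is either −θ or a special simple root (coefficient 1 in the highest root). -/
import Mathlib


open scoped RealInnerProductSpace

variable {V : Type*} [NormedAddCommGroup V] [InnerProductSpace ℝ V]

/-- The Weyl group: the subgroup of linear isometries generated by the
reflections in the roots. -/
def weylGroup (R : Finset V) : Subgroup (V ≃ₗᵢ[ℝ] V) :=
  Subgroup.closure {w | ∃ α ∈ R, ∀ v, w v = v - (2 * ⟪v, α⟫ / ⟪α, α⟫) • α}

/-- If `w ∈ W` satisfies `wΔ̄ = Δ̄` where `Δ̄ = Δ ∪ {-θ}`, then `w(-θ)` is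
either `-θ` or a special simple root (coefficient 1 in the highest root). -/
theorem stabilizer_image_of_lowest_root
    (R : Finset V)
    (h0 : (0 : V) ∉ R)
    (hspan : Submodule.span ℝ (R : Set V) = ⊤)
    (hneg : ∀ α ∈ R, -α ∈ R)
    (hint : ∀ α ∈ R, ∀ β ∈ R, ∃ z : ℤ, 2 * ⟪α, β⟫ / ⟪α, α⟫ = (z : ℝ))
    (hrefl : ∀ α ∈ R, ∀ β ∈ R, β - (2 * ⟪β, α⟫ / ⟪α, α⟫) • α ∈ R)
    (hirr : ∀ R₁ R₂ : Set V, (R : Set V) = R₁ ∪ R₂ →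
      (∀ α ∈ R₁, ∀ β ∈ R₂, ⟪α, β⟫ = 0) → R₁ = ∅ ∨ R₂ = ∅)
    (θ : V) (hθR : θ ∈ R) (hθ2 : ⟪θ, θ⟫ = 2)
    (hlong : ∀ α ∈ R, ⟪α, α⟫ ≤ ⟪θ, θ⟫)
    {n : ℕ} (Δ : Fin n → V)
    (hΔR : ∀ i, Δ i ∈ R)
    (hΔind : LinearIndependent ℝ Δ)
    (hbase : ∀ α ∈ R, α ∈ AddSubmonoid.closure (Set.range Δ) ∨
      -α ∈ AddSubmonoid.closure (Set.range Δ))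
    (m : Fin n → ℕ) (hm : ∀ i, 1 ≤ m i)
    (hθsum : θ = ∑ i, (m i : ℝ) • Δ i)
    (ϖ : Fin n → V)
    (hϖ : ∀ i j, ⟪ϖ i, Δ j⟫ = if i = j then 1 else 0)
    (w : V ≃ₗᵢ[ℝ] V) (hw : w ∈ weylGroup R)
    (hstab : (fun v => w v) '' (insert (-θ) (Set.range Δ)) =
      insert (-θ) (Set.range Δ)) :
    w (-θ) = -θ ∨ ∃ i, m i = 1 ∧ w (-θ) = Δ i := by

  classical
  set S : Set V := insert (-θ) (Set.range Δ) with hS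
  have hpi : ∀ i, ⟪ϖ i, θ⟫ = (m i : ℝ) := by
    intro i
    rw [hθsum, inner_sum]
    rw [Finset.sum_eq_single i]
    · rw [real_inner_smul_right, hϖ, if_pos rfl, mul_one]
    · intro b _ hb
      rw [real_inner_smul_right, hϖ, if_neg (Ne.symm hb), mul_zero]
    · intro h; exact absurd (Finset.mem_univ i) h
  have hmi_pos : ∀ i, (0:ℝ) < m i := fun i => by
    exact_mod_cast Nat.lt_of_lt_of_le Nat.zero_lt_one (hm i)
  have hne : ∀ i, -θ ≠ Δ i := by
    intro i h
    have h1 : ⟪ϖ i, -θ⟫ = -(m i : ℝ) := by rw [inner_neg_right, hpi]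
    rw [h, hϖ, if_pos rfl] at h1
    linarith [hmi_pos i]
  have hmem : ∀ x ∈ S, w x ∈ S := by
    intro x hx
    rw [← hstab]
    exact ⟨x, hx, rfl⟩
  have hwθ : w (-θ) ∈ S := hmem _ (Set.mem_insert _ _)
  rcases hwθ with h | ⟨i, hi⟩
  · exact Or.inl h
  · refine Or.inr ⟨i, ?_, hi.symm⟩
    have hkey : ∀ j, w (Δ j) ≠ Δ i := by
      intro j h
      exact hne j (w.injective (h.trans hi)).symm
    have hval : ∀ j, ⟪ϖ i, w (Δ j)⟫ = if w (Δ j) = -θ then -(m i : ℝ) else 0 := by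
      intro j
      rcases hmem (Δ j) (Set.mem_insert_of_mem _ ⟨j, rfl⟩) with h | ⟨k, hk⟩
      · rw [if_pos h, h, inner_neg_right, hpi]
      · rw [if_neg (fun hc => hne k (hk.trans hc).symm), ← hk, hϖ,
          if_neg (fun hik => hkey j (by rw [← hk, hik]))]
    have hsurj : ∃ x ∈ S, w x = -θ := by
      have : (-θ) ∈ (fun v => w v) '' S := by rw [hstab]; exact Set.mem_insert _ _
      rcases this with ⟨x, hx, hwx⟩
      exact ⟨x, hx, hwx⟩
    obtain ⟨x, hxS, hwx⟩ := hsurj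
    have hxΔ : ∃ j₀, Δ j₀ = x := by
      rcases hxS with h | ⟨j₀, hj₀⟩
      · exfalso
        have hww : w (-θ) = -θ := h ▸ hwx
        exact hne i (hi.trans hww).symm
      · exact ⟨j₀, hj₀⟩
    obtain ⟨j₀, hj₀⟩ := hxΔ
    have hwj₀ : w (Δ j₀) = -θ := by rw [hj₀]; exact hwx
    have hrel : Δ i = -(∑ j, (m j : ℝ) • w (Δ j)) := by
      rw [hi, map_neg, neg_inj, hθsum, map_sum]
      simp [map_smul]
    have h1 : (1:ℝ) = (m j₀ : ℝ) * (m i : ℝ) := by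
      have hc := congrArg (fun v => ⟪ϖ i, v⟫) hrel
      simp only [inner_neg_right, inner_sum, real_inner_smul_right] at hc
      rw [hϖ, if_pos rfl] at hc
      rw [hc, Finset.sum_eq_single j₀]
      · rw [hval, if_pos hwj₀]; ring
      · intro b _ hb
        rw [hval, if_neg, mul_zero]
        intro hcc
        exact hb (hΔind.injective (w.injective (hcc.trans hwj₀.symm)))
      · intro h; exact absurd (Finset.mem_univ j₀) h
    have hnat : m j₀ * m i = 1 := by exact_mod_cast h1.symm
    exact Nat.eq_one_of_mul_eq_one_left hnat
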